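/- Let r, λ, x* > 0 and κ ∈ (0,1), and let h : (0,∞) → ℝ be continuous, bounded and twice differentiable. Suppose that for all x̃ > x*κ/(1 − κ): r(x̃ + x*)·x̃·h'(x̃) − λ(x̃ + x*)·h(x̃) + (λ/κ)·∫_{(x̃ + x*)(1 − κ)}^{x̃ + x*} h(u − x*) du = 0. Then for all x̃ > x*κ/(1 − κ): x̃(x̃ + x*)·h''(x̃) + ((2 − λ/r)·x̃ + x*(1 − λ/r))·h'(x̃) + (λ(1 − κ)/(rκ))·h(x̃) = (λ(1 − κ)/(rκ))·h((1 − κ)x̃ − x*κ). -/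

import Mathlib

open MeasureTheory

/-- Differentiating the insured generator equation on the upper region: if a bounded,
continuous, twice differentiable `h` satisfies
`r(x̃+x*)x̃ h'(x̃) − λ(x̃+x*)h(x̃) + (λ/κ)∫_{(x̃+x*)(1−κ)}^{x̃+x*} h(u−x*) du = 0`
for all `x̃ > x*κ/(1−κ)`, then for all such `x̃`,
`x̃(x̃+x*)h''(x̃) + ((2−λ/r)x̃ + x*(1−λ/r))h'(x̃) + (λ(1−κ)/(rκ))h(x̃)
  = (λ(1−κ)/(rκ)) h((1−κ)x̃ − x*κ)`. -/
theorem stmt13 (r lam xstar κ : ℝ) (hr : 0 < r) (hlam : 0 < lam) (hxstar : 0 < xstar)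
    (hκ : κ ∈ Set.Ioo (0:ℝ) 1) (h : ℝ → ℝ)
    (hcont : ContinuousOn h (Set.Ioi 0))
    (hbdd : ∃ C : ℝ, ∀ x ∈ Set.Ioi (0:ℝ), |h x| ≤ C)
    (hd1 : ∀ x ∈ Set.Ioi (0:ℝ), DifferentiableAt ℝ h x)
    (hd2 : ∀ x ∈ Set.Ioi (0:ℝ), DifferentiableAt ℝ (deriv h) x)
    (hgen : ∀ x : ℝ, xstar * κ / (1 - κ) < x →
      r * (x + xstar) * x * deriv h x - lam * (x + xstar) * h x +
        (lam / κ) * ∫ u in ((x + xstar) * (1 - κ))..(x + xstar), h (u - xstar) = 0) :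
    ∀ x : ℝ, xstar * κ / (1 - κ) < x →
      x * (x + xstar) * deriv (deriv h) x +
          ((2 - lam / r) * x + xstar * (1 - lam / r)) * deriv h x +
          (lam * (1 - κ) / (r * κ)) * h x =
        (lam * (1 - κ) / (r * κ)) * h ((1 - κ) * x - xstar * κ) := by
  obtain ⟨hκ0, hκ1⟩ := hκ
  have h1κ : 0 < 1 - κ := by linarith
  intro x₀ hx₀
  have hcpos : 0 < xstar * κ / (1 - κ) := div_pos (mul_pos hxstar hκ0) h1κ
  have hx₀pos : 0 < x₀ := lt_trans hcpos hx₀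
  have hL : ∀ x : ℝ, xstar * κ / (1 - κ) < x → 0 < (1 - κ) * x - xstar * κ := by
    intro x hx
    have := (div_lt_iff₀ h1κ).mp hx
    nlinarith
  have hii : ∀ a b : ℝ, 0 < a → 0 < b → IntervalIntegrable h volume a b := by
    intro a b ha hb
    apply ContinuousOn.intervalIntegrable
    apply hcont.mono
    intro t ht
    rcases Set.mem_uIcc.mp ht with ⟨h1, _⟩ | ⟨h1, _⟩
    · exact lt_of_lt_of_le ha h1
    · exact lt_of_lt_of_le hb h1
  -- rewrite the integral
  have hint_eq : ∀ x : ℝ, xstar * κ / (1 - κ) < x →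
      (∫ u in ((x + xstar) * (1 - κ))..(x + xstar), h (u - xstar))
        = (∫ v in xstar..x, h v) - ∫ v in xstar..((1 - κ) * x - xstar * κ), h v := by
    intro x hx
    have hxpos : 0 < x := lt_trans hcpos hx
    have hLx := hL x hx
    rw [intervalIntegral.integral_comp_sub_right]
    have e1 : (x + xstar) * (1 - κ) - xstar = (1 - κ) * x - xstar * κ := by ring
    have e2 : (x + xstar) - xstar = x := by ring
    rw [e1, e2, ← intervalIntegral.integral_add_adjacent_intervals
      (hii xstar ((1 - κ) * x - xstar * κ) hxstar hLx)
      (hii ((1 - κ) * x - xstar * κ) x hLx hxpos)]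
    ring
  -- derivatives
  have hdh : HasDerivAt h (deriv h x₀) x₀ := (hd1 x₀ hx₀pos).hasDerivAt
  have hdh' : HasDerivAt (deriv h) (deriv (deriv h) x₀) x₀ := (hd2 x₀ hx₀pos).hasDerivAt
  have hmeas := ContinuousOn.stronglyMeasurableAtFilter (μ := volume) isOpen_Ioi hcont
  have hprim : ∀ y : ℝ, 0 < y → HasDerivAt (fun t => ∫ v in xstar..t, h v) (h y) y := by
    intro y hy
    exact intervalIntegral.integral_hasDerivAt_right (hii xstar y hxstar hy) (hmeas y hy)
      (hcont.continuousAt (isOpen_Ioi.mem_nhds hy))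
  have hI1 : HasDerivAt (fun x => ∫ v in xstar..x, h v) (h x₀) x₀ := hprim x₀ hx₀pos
  have hLd : HasDerivAt (fun x => (1 - κ) * x - xstar * κ) (1 - κ) x₀ := by
    simpa using ((hasDerivAt_id x₀).const_mul (1 - κ)).sub_const (xstar * κ)
  have hI2 : HasDerivAt (fun x => ∫ v in xstar..((1 - κ) * x - xstar * κ), h v)
      (h ((1 - κ) * x₀ - xstar * κ) * (1 - κ)) x₀ :=
    HasDerivAt.comp x₀ (hprim _ (hL x₀ hx₀)) hLd
  have hA : HasDerivAt (fun x => r * (x + xstar) * x * deriv h x)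
      ((r * 1 * x₀ + r * (x₀ + xstar) * 1) * deriv h x₀
        + r * (x₀ + xstar) * x₀ * deriv (deriv h) x₀) x₀ :=
    ((((hasDerivAt_id x₀).add_const xstar).const_mul r).mul (hasDerivAt_id x₀)).mul hdh'
  have hB : HasDerivAt (fun x => lam * (x + xstar) * h x)
      (lam * 1 * h x₀ + lam * (x₀ + xstar) * deriv h x₀) x₀ :=
    (((hasDerivAt_id x₀).add_const xstar).const_mul lam).mul hdh
  have hC : HasDerivAt
      (fun x => (lam / κ) * ((∫ v in xstar..x, h v) - ∫ v in xstar..((1 - κ) * x - xstar * κ), h v))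
      ((lam / κ) * (h x₀ - h ((1 - κ) * x₀ - xstar * κ) * (1 - κ))) x₀ :=
    (hI1.sub hI2).const_mul (lam / κ)
  have hF : HasDerivAt
      (fun x => r * (x + xstar) * x * deriv h x - lam * (x + xstar) * h x +
        (lam / κ) * ((∫ v in xstar..x, h v) - ∫ v in xstar..((1 - κ) * x - xstar * κ), h v))
      ((r * 1 * x₀ + r * (x₀ + xstar) * 1) * deriv h x₀
        + r * (x₀ + xstar) * x₀ * deriv (deriv h) x₀
        - (lam * 1 * h x₀ + lam * (x₀ + xstar) * deriv h x₀)
        + (lam / κ) * (h x₀ - h ((1 - κ) * x₀ - xstar * κ) * (1 - κ))) x₀ :=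
    (hA.sub hB).add hC
  have hev : (fun x => r * (x + xstar) * x * deriv h x - lam * (x + xstar) * h x +
        (lam / κ) * ((∫ v in xstar..x, h v) - ∫ v in xstar..((1 - κ) * x - xstar * κ), h v))
      =ᶠ[nhds x₀] fun _ => (0:ℝ) := by
    filter_upwards [isOpen_Ioi.mem_nhds (show x₀ ∈ Set.Ioi (xstar * κ / (1 - κ)) from hx₀)]
      with x hx
    rw [← hint_eq x hx]
    exact hgen x hx
  have hF0 : HasDerivAt
      (fun x => r * (x + xstar) * x * deriv h x - lam * (x + xstar) * h x +
        (lam / κ) * ((∫ v in xstar..x, h v) - ∫ v in xstar..((1 - κ) * x - xstar * κ), h v))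
      0 x₀ := (hasDerivAt_const x₀ (0:ℝ)).congr_of_eventuallyEq hev
  have hD0 := hF.unique hF0
  have hrne : r ≠ 0 := hr.ne'
  have hκne : κ ≠ 0 := hκ0.ne'
  field_simp at hD0 ⊢
  linear_combination hD0
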